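/- Let gas be a GCM satisfying Easy Gas Estimation, i.e., gas_{T∪{tx}}(tx) does not depend on T (write gas(tx)). Suppose the makespan function v satisfies: for any two transactions tx, tx' with K(tx) ∩ K(tx') = ∅, v({tx, tx'}) = max(t(tx), t(tx')), and for any two transactions with K(tx) ∩ K(tx') ≠ ∅, v({tx, tx'}) = t(tx) + t(tx'). If gas additionally satisfies Scheduling Monotonicity with respect to v, then gas is a constant mechanism: gas(tx1) = gas(tx2) for all transactions tx1, tx2. -/
import Mathlib


/-- A GCM satisfying Easy Gas Estimation together with
Scheduling Monotonicity (with respect to a makespan function `v` behaving as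
described on two-element sets) must be a constant mechanism. -/
theorem easy_gas_estimation_and_scheduling_monotonicity_implies_constant
    {Key Tx : Type} [Infinite Key] [DecidableEq Key] [DecidableEq Tx]
    (t : Tx → ℝ) (keys : Tx → Finset Key)
    (htpos : ∀ tx, 0 < t tx) (hKne : ∀ tx, (keys tx).Nonempty)
    -- richness: every admissible pair `(τ, K)` is realized by some transaction
    (hrich : ∀ (τ : ℝ) (K : Finset Key), 0 < τ → K.Nonempty →
      ∃ tx, t tx = τ ∧ keys tx = K)
    (v : Finset Tx → ℝ)
    -- two transactions with disjoint key sets can be run in parallel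
    (hvdisj : ∀ tx tx' : Tx, tx ≠ tx' → keys tx ∩ keys tx' = ∅ →
      v {tx, tx'} = max (t tx) (t tx'))
    -- two conflicting transactions must be run sequentially
    (hvconf : ∀ tx tx' : Tx, tx ≠ tx' → keys tx ∩ keys tx' ≠ ∅ →
      v {tx, tx'} = t tx + t tx')
    (gas : Finset Tx → Tx → ℝ)
    -- Easy Gas Estimation: gas_{T∪{tx}}(tx) does not depend on T
    (heasy : ∀ (T1 T2 : Finset Tx) (tx : Tx),
      gas (insert tx T1) tx = gas (insert tx T2) tx)
    -- Scheduling Monotonicity with respect to v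
    (hsched : ∀ (T : Finset Tx) (tx1 tx2 : Tx), tx1 ∉ T → tx2 ∉ T →
      v (insert tx1 T) < v (insert tx2 T) →
      gas (insert tx1 T) tx1 ≤ gas (insert tx2 T) tx2) :
    -- gas is a constant mechanism
    ∀ tx1 tx2 : Tx, gas {tx1} tx1 = gas {tx2} tx2 := by
  -- First, a key lemma: two distinct transactions with disjoint key sets
  -- have equal gas.
  have hle : ∀ a b : Tx, a ≠ b → keys a ∩ keys b = ∅ → gas {a} a ≤ gas {b} b := by
    intro a b hab hdisj
    obtain ⟨c, htc, hkc⟩ := hrich (t a + t b) (keys b)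
      (by have := htpos a; have := htpos b; linarith) (hKne b)
    have hca : c ≠ a := by
      intro h
      subst h
      have : keys c ∩ keys b = keys b := by rw [hkc, Finset.inter_self]
      rw [hdisj] at this
      exact absurd this.symm (hKne b).ne_empty
    have hcb : c ≠ b := by
      intro h
      subst h
      have := htpos a
      linarith
    have ha1 : v (insert a {c}) = t a + t b := by
      have : v ({a, c} : Finset Tx) = max (t a) (t c) :=
        hvdisj a c (Ne.symm hca) (by rw [hkc]; exact hdisj)
      rw [show (insert a {c} : Finset Tx) = {a, c} from rfl, this, htc]
      have := htpos b
      rw [max_eq_right (by linarith)]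
    have hb1 : v (insert b {c}) = t b + (t a + t b) := by
      have : v ({b, c} : Finset Tx) = t b + t c :=
        hvconf b c (Ne.symm hcb)
          (by rw [hkc, Finset.inter_self]; exact (hKne b).ne_empty)
      rw [show (insert b {c} : Finset Tx) = {b, c} from rfl, this, htc]
    have hlt : v (insert a {c}) < v (insert b {c}) := by
      rw [ha1, hb1]; have := htpos b; linarith
    have := hsched {c} a b
      (by simp [Ne.symm hca]) (by simp [Ne.symm hcb]) hlt
    calc gas {a} a = gas (insert a {c}) a := heasy ∅ {c} a
      _ ≤ gas (insert b {c}) b := this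
      _ = gas {b} b := heasy {c} ∅ b
  have heq : ∀ a b : Tx, a ≠ b → keys a ∩ keys b = ∅ → gas {a} a = gas {b} b := by
    intro a b hab hdisj
    exact le_antisymm (hle a b hab hdisj)
      (hle b a hab.symm (by rw [Finset.inter_comm]; exact hdisj))
  intro tx1 tx2
  by_cases h12 : tx1 = tx2
  · rw [h12]
  · obtain ⟨k, hk⟩ := Infinite.exists_notMem_finset (keys tx1 ∪ keys tx2)
    simp only [Finset.mem_union, not_or] at hk
    obtain ⟨c, htc, hkc⟩ := hrich 1 {k} one_pos ⟨k, Finset.mem_singleton_self k⟩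
    have hd1 : keys c ∩ keys tx1 = ∅ := by
      rw [hkc]
      ext x
      simp only [Finset.mem_inter, Finset.mem_singleton, Finset.notMem_empty,
        iff_false, not_and]
      rintro rfl; exact hk.1
    have hd2 : keys c ∩ keys tx2 = ∅ := by
      rw [hkc]
      ext x
      simp only [Finset.mem_inter, Finset.mem_singleton, Finset.notMem_empty,
        iff_false, not_and]
      rintro rfl; exact hk.2
    have hc1 : c ≠ tx1 := by
      intro h; subst h
      have : keys c ∩ keys c = keys c := Finset.inter_self _
      rw [hd1] at this
      exact absurd this.symm (hKne c).ne_empty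
    have hc2 : c ≠ tx2 := by
      intro h; subst h
      have : keys c ∩ keys c = keys c := Finset.inter_self _
      rw [hd2] at this
      exact absurd this.symm (hKne c).ne_empty
    calc gas {tx1} tx1 = gas {c} c :=
          (heq c tx1 hc1 hd1).symm
      _ = gas {tx2} tx2 := heq c tx2 hc2 hd2
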